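/- Let f : ℝ^n → ℝ be differentiable with gradient ∇f, attain its minimum value f* at a unique minimizer x*, and satisfy the PL inequality (1/2)‖∇f(x)‖² ≥ μ(f(x) − f*) for all x, with μ > 0, as well as the quadratic growth condition f(x) − f* ≥ (μ/2)‖x − x*‖² for all x. Let ε : ℝ^n → ℝ^n satisfy ‖ε(x)‖ ≤ l·‖x − x*‖² for all x, with l > 0. Let c1, c2 > 0 satisfy c1 > l/μ² and c2 > l/μ², let p1 > 2 and p2 ∈ (1, 3/2], and set l̄ := l/μ², α := p1/(2(p1−1)), β := p2/(2(p2−1)), p := (c1 − l̄)(2μ)^α, q := (c2 − l̄)(2μ)^β, T := 1/(p(1−α)) + 1/(q(β−1)). Then every differentiable curve x : ℝ → ℝ^n satisfying, for all t ≥ 0, x′(t) = −c1∇f(x(t))/‖∇f(x(t))‖^((p1−2)/(p1−1)) − c2∇f(x(t))/‖∇f(x(t))‖^((p2−2)/(p2−1)) + ε(x(t)) when ∇f(x(t)) ≠ 0, and x′(t) = 0 when ∇f(x(t)) = 0, satisfies x(t) = x* for all t ≥ T. -/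

import Mathlib

open Classical
open Set
open scoped RealInnerProductSpace

lemma fxts_comparison (p q α β : ℝ) (hp : 0 < p) (hq : 0 < q)
    (hα0 : 0 < α) (hα1 : α < 1) (hβ : 1 < β)
    (V V' : ℝ → ℝ) (hd : ∀ t, 0 ≤ t → HasDerivAt V (V' t) t)
    (hVnn : ∀ t, 0 ≤ V t)
    (hineq : ∀ t, 0 ≤ t → V' t ≤ -(p * V t ^ α) - q * V t ^ β) :
    ∀ t, 1 / (p * (1 - α)) + 1 / (q * (β - 1)) ≤ t → V t = 0 := by
  have hβ1 : 0 < β - 1 := by linarith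
  have h1α : 0 < 1 - α := by linarith
  set t1 : ℝ := 1 / (q * (β - 1)) with ht1
  set t2 : ℝ := t1 + 1 / (p * (1 - α)) with ht2
  have ht1pos : 0 < t1 := by rw [ht1]; positivity
  have hd2pos : 0 < 1 / (p * (1 - α)) := by positivity
  have ht2pos : 0 < t2 := by rw [ht2]; linarith
  have ht1le2 : t1 ≤ t2 := by rw [ht2]; linarith
  -- V' is nonpositive on [0, ∞)
  have hV'le : ∀ t, 0 ≤ t → V' t ≤ 0 := by
    intro t ht
    have h := hineq t ht
    have h1 : 0 ≤ p * V t ^ α := mul_nonneg hp.le (Real.rpow_nonneg (hVnn t) _)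
    have h2 : 0 ≤ q * V t ^ β := mul_nonneg hq.le (Real.rpow_nonneg (hVnn t) _)
    linarith
  -- V antitone on Ici 0
  have hanti : AntitoneOn V (Ici 0) := by
    apply antitoneOn_of_deriv_nonpos (convex_Ici 0)
    · exact fun t ht => (hd t ht).continuousAt.continuousWithinAt
    · intro t ht
      rw [interior_Ici] at ht
      exact ((hd t ht.le).differentiableAt).differentiableWithinAt
    · intro t ht
      rw [interior_Ici] at ht
      rw [(hd t ht.le).deriv]
      exact hV'le t ht.le
  -- Step B : V t1 ≤ 1
  have hVt1 : V t1 ≤ 1 := by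
    by_contra hcon
    push_neg at hcon
    have hVpos : ∀ s ∈ Icc (0:ℝ) t1, 1 < V s := fun s hs =>
      lt_of_lt_of_le hcon (hanti (mem_Ici.mpr hs.1) (mem_Ici.mpr ht1pos.le) hs.2)
    -- G s = V s ^ (1 - β) - q * (β-1) * s  is monotone on [0, t1]
    set G : ℝ → ℝ := fun s => V s ^ (1 - β) - q * (β - 1) * s with hG
    have hGd : ∀ s ∈ Icc (0:ℝ) t1, HasDerivAt G
        (V' s * (1 - β) * V s ^ (1 - β - 1) - q * (β - 1)) s := by
      intro s hs
      have h1 : HasDerivAt (fun u => V u ^ (1 - β))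
          (V' s * (1 - β) * V s ^ (1 - β - 1)) s :=
        (hd s hs.1).rpow_const (Or.inl (by have := hVpos s hs; linarith))
      have h2 : HasDerivAt (fun u : ℝ => q * (β - 1) * u) (q * (β - 1)) s := by
        simpa using (hasDerivAt_id s).const_mul (q * (β - 1))
      exact h1.sub h2
    have hGderiv_nonneg : ∀ s ∈ Icc (0:ℝ) t1,
        0 ≤ V' s * (1 - β) * V s ^ (1 - β - 1) - q * (β - 1) := by
      intro s hs
      have hVs : 1 < V s := hVpos s hs
      have hVs0 : 0 < V s := by linarith
      have hi := hineq s hs.1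
      have hqb : V' s ≤ -(q * V s ^ β) := by
        have h1 : 0 ≤ p * V s ^ α := mul_nonneg hp.le (Real.rpow_nonneg (hVnn s) _)
        linarith
      -- multiply by (1-β) < 0 and V s ^ (1-β-1) > 0
      have hpow_pos : 0 < V s ^ (1 - β - 1) := Real.rpow_pos_of_pos hVs0 _
      have key : q * (β - 1) ≤ V' s * (1 - β) * V s ^ (1 - β - 1) := by
        have h3 : (q * V s ^ β) * (β - 1) * V s ^ (1 - β - 1)
            ≤ V' s * (1 - β) * V s ^ (1 - β - 1) := by
          have : V' s * (1 - β) = (-V' s) * (β - 1) := by ring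
          rw [this]
          apply mul_le_mul_of_nonneg_right _ hpow_pos.le
          apply mul_le_mul_of_nonneg_right _ hβ1.le
          linarith
        have h4 : (q * V s ^ β) * (β - 1) * V s ^ (1 - β - 1) = q * (β - 1) := by
          have : V s ^ β * V s ^ (1 - β - 1) = V s ^ (β + (1 - β - 1)) :=
            (Real.rpow_add hVs0 _ _).symm
          have h5 : V s ^ β * V s ^ (1 - β - 1) = V s ^ (0:ℝ) := by
            rw [this]; ring_nf
          rw [Real.rpow_zero] at h5
          calc (q * V s ^ β) * (β - 1) * V s ^ (1 - β - 1)
              = q * (β - 1) * (V s ^ β * V s ^ (1 - β - 1)) := by ring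
            _ = q * (β - 1) := by rw [h5, mul_one]
        linarith [h3, h4.symm.le]
      linarith
    have hGmono : MonotoneOn G (Icc (0:ℝ) t1) := by
      apply monotoneOn_of_deriv_nonneg (convex_Icc 0 t1)
      · exact fun s hs => (hGd s hs).continuousAt.continuousWithinAt
      · intro s hs
        rw [interior_Icc] at hs
        exact (hGd s (Ioo_subset_Icc_self hs)).differentiableAt.differentiableWithinAt
      · intro s hs
        rw [interior_Icc] at hs
        rw [(hGd s (Ioo_subset_Icc_self hs)).deriv]
        exact hGderiv_nonneg s (Ioo_subset_Icc_self hs)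
    have hG01 : G 0 ≤ G t1 :=
      hGmono (left_mem_Icc.mpr ht1pos.le) (right_mem_Icc.mpr ht1pos.le) ht1pos.le
    have hqt1 : q * (β - 1) * t1 = 1 := by
      rw [ht1]
      field_simp
    have hV0pos : 0 < V 0 := lt_trans one_pos (hVpos 0 (left_mem_Icc.mpr ht1pos.le))
    have hG0 : G 0 = V 0 ^ (1 - β) := by simp [hG]
    have hGt1 : G t1 = V t1 ^ (1 - β) - 1 := by simp only [hG]; rw [hqt1]
    have hV0p : 0 < V 0 ^ (1 - β) := Real.rpow_pos_of_pos hV0pos _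
    have hVt1lt : V t1 ^ (1 - β) < 1 := by
      apply Real.rpow_lt_one_of_one_lt_of_neg hcon
      linarith
    rw [hG0, hGt1] at hG01
    linarith
  -- Step C : V t2 = 0
  have hVt2 : V t2 = 0 := by
    by_contra hcon
    have hVt2pos : 0 < V t2 := lt_of_le_of_ne (hVnn t2) (Ne.symm hcon)
    have hVpos : ∀ s ∈ Icc t1 t2, 0 < V s := fun s hs =>
      lt_of_lt_of_le hVt2pos (hanti (mem_Ici.mpr (le_trans ht1pos.le hs.1))
        (mem_Ici.mpr ht2pos.le) hs.2)
    set H : ℝ → ℝ := fun s => V s ^ (1 - α) + p * (1 - α) * s with hH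
    have hHd : ∀ s ∈ Icc t1 t2, HasDerivAt H
        (V' s * (1 - α) * V s ^ (1 - α - 1) + p * (1 - α)) s := by
      intro s hs
      have h1 : HasDerivAt (fun u => V u ^ (1 - α))
          (V' s * (1 - α) * V s ^ (1 - α - 1)) s :=
        (hd s (le_trans ht1pos.le hs.1)).rpow_const (Or.inl (hVpos s hs).ne')
      have h2 : HasDerivAt (fun u : ℝ => p * (1 - α) * u) (p * (1 - α)) s := by
        simpa using (hasDerivAt_id s).const_mul (p * (1 - α))
      exact h1.add h2
    have hHderiv : ∀ s ∈ Icc t1 t2,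
        V' s * (1 - α) * V s ^ (1 - α - 1) + p * (1 - α) ≤ 0 := by
      intro s hs
      have hVs0 : 0 < V s := hVpos s hs
      have hs0 : (0:ℝ) ≤ s := le_trans ht1pos.le hs.1
      have hi := hineq s hs0
      have hpa : V' s ≤ -(p * V s ^ α) := by
        have h2 : 0 ≤ q * V s ^ β := mul_nonneg hq.le (Real.rpow_nonneg (hVnn s) _)
        linarith
      have hpow_pos : 0 < V s ^ (1 - α - 1) := Real.rpow_pos_of_pos hVs0 _
      have h3 : V' s * (1 - α) * V s ^ (1 - α - 1)
          ≤ (-(p * V s ^ α)) * (1 - α) * V s ^ (1 - α - 1) := by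
        apply mul_le_mul_of_nonneg_right _ hpow_pos.le
        exact mul_le_mul_of_nonneg_right hpa h1α.le
      have h4 : (-(p * V s ^ α)) * (1 - α) * V s ^ (1 - α - 1) = -(p * (1 - α)) := by
        have h5 : V s ^ α * V s ^ (1 - α - 1) = V s ^ (0:ℝ) := by
          rw [← Real.rpow_add hVs0]; ring_nf
        rw [Real.rpow_zero] at h5
        calc (-(p * V s ^ α)) * (1 - α) * V s ^ (1 - α - 1)
            = -(p * (1 - α)) * (V s ^ α * V s ^ (1 - α - 1)) := by ring
          _ = -(p * (1 - α)) := by rw [h5, mul_one]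
      linarith
    have hHanti : AntitoneOn H (Icc t1 t2) := by
      apply antitoneOn_of_deriv_nonpos (convex_Icc t1 t2)
      · exact fun s hs => (hHd s hs).continuousAt.continuousWithinAt
      · intro s hs
        rw [interior_Icc] at hs
        exact (hHd s (Ioo_subset_Icc_self hs)).differentiableAt.differentiableWithinAt
      · intro s hs
        rw [interior_Icc] at hs
        rw [(hHd s (Ioo_subset_Icc_self hs)).deriv]
        exact hHderiv s (Ioo_subset_Icc_self hs)
    have hH12 : H t2 ≤ H t1 :=
      hHanti (left_mem_Icc.mpr ht1le2) (right_mem_Icc.mpr ht1le2) ht1le2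
    have harith : p * (1 - α) * t2 - p * (1 - α) * t1 = 1 := by
      rw [ht2]
      field_simp
      ring
    have hVt1pow : V t1 ^ (1 - α) ≤ 1 :=
      Real.rpow_le_one (hVnn t1) hVt1 h1α.le
    have hVt2pow : 0 < V t2 ^ (1 - α) := Real.rpow_pos_of_pos hVt2pos _
    simp only [hH] at hH12
    linarith
  -- conclude
  intro t ht
  have htT : t2 ≤ t := by rw [ht2, ht1]; linarith
  have : V t ≤ V t2 := hanti (mem_Ici.mpr ht2pos.le) (mem_Ici.mpr (le_trans ht2pos.le htT)) htT
  have := hVnn t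
  linarith [hVt2 ▸ ‹V t ≤ V t2›]



set_option maxHeartbeats 1000000

/-- Theorem 2, robustness of FxTS-GF: the perturbed FxTS-GF flow
with a vanishing additive disturbance `ε` (with `‖ε(x)‖ ≤ l‖x-x*‖²`) still
reaches the optimizer `x*` within the fixed time `T` built from the reduced
coefficients `c1 - l̄`, `c2 - l̄`, where `l̄ = l/μ²`. -/
theorem stmt_7 (n : ℕ) (f : EuclideanSpace ℝ (Fin n) → ℝ)
    (f' : EuclideanSpace ℝ (Fin n) → EuclideanSpace ℝ (Fin n))
    (hgrad : ∀ y, HasGradientAt f (f' y) y)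
    (xstar : EuclideanSpace ℝ (Fin n)) (fstar μ : ℝ) (hμ : 0 < μ)
    (hfstar : f xstar = fstar) (hmin : ∀ y, fstar ≤ f y)
    (huniq : ∀ y, f y = fstar → y = xstar)
    (hPL : ∀ y, μ * (f y - fstar) ≤ (1 / 2) * ‖f' y‖ ^ 2)
    (hQG : ∀ y, (μ / 2) * ‖y - xstar‖ ^ 2 ≤ f y - fstar)
    (ε : EuclideanSpace ℝ (Fin n) → EuclideanSpace ℝ (Fin n))
    (l : ℝ) (hl : 0 < l)
    (hε : ∀ y, ‖ε y‖ ≤ l * ‖y - xstar‖ ^ 2)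
    (c1 c2 p1 p2 : ℝ) (hc1 : 0 < c1) (hc2 : 0 < c2)
    (hc1l : l / μ ^ 2 < c1) (hc2l : l / μ ^ 2 < c2)
    (hp1 : 2 < p1) (hp2 : p2 ∈ Set.Ioc (1 : ℝ) (3 / 2))
    (lbar α β p q T : ℝ) (hlbar : lbar = l / μ ^ 2)
    (hα : α = p1 / (2 * (p1 - 1))) (hβ : β = p2 / (2 * (p2 - 1)))
    (hpdef : p = (c1 - lbar) * (2 * μ) ^ α) (hqdef : q = (c2 - lbar) * (2 * μ) ^ β)
    (hT : T = 1 / (p * (1 - α)) + 1 / (q * (β - 1))) :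
    ∀ x : ℝ → EuclideanSpace ℝ (Fin n),
      (∀ t, 0 ≤ t → HasDerivAt x
        (if f' (x t) = 0 then 0 else
          -(c1 / ‖f' (x t)‖ ^ ((p1 - 2) / (p1 - 1))) • f' (x t)
            - (c2 / ‖f' (x t)‖ ^ ((p2 - 2) / (p2 - 1))) • f' (x t)
            + ε (x t)) t) →
      ∀ t, T ≤ t → x t = xstar := by
  obtain ⟨hp2a, hp2b⟩ := hp2
  -- numeric facts
  have hp11 : (1:ℝ) < p1 - 1 := by linarith
  have hp21 : (0:ℝ) < p2 - 1 := by linarith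
  have hα0 : 0 < α := by rw [hα]; positivity
  have hα1 : α < 1 := by
    rw [hα, div_lt_one (by linarith)]; linarith
  have h2α3 : 2 * α ≤ 3 := by
    rw [hα]
    rw [show 2 * (p1 / (2 * (p1 - 1))) = p1 / (p1 - 1) by field_simp]
    rw [div_le_iff₀ (by linarith)]; linarith
  have hβ1 : 1 < β := by
    rw [hβ, lt_div_iff₀ (by linarith)]; linarith
  have hβ0 : 0 < β := by linarith
  have h32β : 3 ≤ 2 * β := by
    rw [hβ]
    rw [show 2 * (p2 / (2 * (p2 - 1))) = p2 / (p2 - 1) by field_simp]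
    rw [le_div_iff₀ hp21]; linarith
  have hc1l' : 0 < c1 - lbar := by rw [hlbar]; linarith
  have hc2l' : 0 < c2 - lbar := by rw [hlbar]; linarith
  have hlbarpos : 0 < lbar := by rw [hlbar]; positivity
  have h2μ : (0:ℝ) < 2 * μ := by linarith
  have hppos : 0 < p := by
    rw [hpdef]; exact mul_pos hc1l' (Real.rpow_pos_of_pos h2μ α)
  have hqpos : 0 < q := by
    rw [hqdef]; exact mul_pos hc2l' (Real.rpow_pos_of_pos h2μ β)
  -- gradient zero implies at minimizer
  have hzero : ∀ y, f' y = 0 → y = xstar := by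
    intro y hy
    have h1 := hPL y
    rw [hy] at h1
    simp at h1
    have h2 := hmin y
    have h3 : 0 ≤ μ * (f y - fstar) := mul_nonneg hμ.le (by linarith)
    have h4 : μ * (f y - fstar) = 0 := le_antisymm h1 h3
    have h5 : f y - fstar = 0 := by
      rcases mul_eq_zero.mp h4 with h | h
      · exact absurd h (ne_of_gt hμ)
      · exact h
    exact huniq y (by linarith)
  intro x hx
  set V : ℝ → ℝ := fun t => f (x t) - fstar with hV
  set Xd : ℝ → EuclideanSpace ℝ (Fin n) := fun t =>
    if f' (x t) = 0 then 0 else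
      -(c1 / ‖f' (x t)‖ ^ ((p1 - 2) / (p1 - 1))) • f' (x t)
        - (c2 / ‖f' (x t)‖ ^ ((p2 - 2) / (p2 - 1))) • f' (x t)
        + ε (x t) with hXd
  set V' : ℝ → ℝ := fun t => ⟪f' (x t), Xd t⟫ with hV'
  have hVnn : ∀ t, 0 ≤ V t := fun t => by simp [hV]; linarith [hmin (x t)]
  have hd : ∀ t, 0 ≤ t → HasDerivAt V (V' t) t := by
    intro t ht
    have h1 := ((hgrad (x t)).hasFDerivAt.comp_hasDerivAt t (hx t ht)).sub_const fstar
    simpa [hV, hV', hXd, InnerProductSpace.toDual_apply_apply, Function.comp] using h1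
  have hineq : ∀ t, 0 ≤ t → V' t ≤ -(p * V t ^ α) - q * V t ^ β := by
    intro t ht
    by_cases hz : f' (x t) = 0
    · have hxt : x t = xstar := hzero _ hz
      have hVt : V t = 0 := by simp [hV, hxt, hfstar]
      have hXt : Xd t = 0 := by simp [hXd, hz]
      simp [hV', hXt, hVt, Real.zero_rpow (ne_of_gt hα0), Real.zero_rpow (ne_of_gt hβ0)]
    · set v := f' (x t) with hv
      set g := ‖v‖ with hg
      have hgpos : 0 < g := norm_pos_iff.mpr hz
      have hVal : V' t = -(c1 / g ^ ((p1 - 2) / (p1 - 1))) * g ^ 2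
          - (c2 / g ^ ((p2 - 2) / (p2 - 1))) * g ^ 2 + ⟪v, ε (x t)⟫ := by
        simp only [hV', hXd, ← hv, ← hg, if_neg hz, inner_add_right, inner_sub_right,
          real_inner_smul_right, real_inner_self_eq_norm_sq]
      clear_value v g
      -- exponent arithmetic
      have he1 : 2 - (p1 - 2) / (p1 - 1) = 2 * α := by
        rw [hα]; field_simp; ring
      have he2 : 2 - (p2 - 2) / (p2 - 1) = 2 * β := by
        rw [hβ]; field_simp; ring
      have hg2 : (g:ℝ) ^ (2:ℕ) = g ^ ((2:ℝ)) := (Real.rpow_two g).symm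
      have hA : c1 / g ^ ((p1 - 2) / (p1 - 1)) * g ^ 2 = c1 * g ^ (2 * α) := by
        rw [hg2, div_mul_eq_mul_div, mul_div_assoc, ← Real.rpow_sub hgpos, he1]
      have hB : c2 / g ^ ((p2 - 2) / (p2 - 1)) * g ^ 2 = c2 * g ^ (2 * β) := by
        rw [hg2, div_mul_eq_mul_div, mul_div_assoc, ← Real.rpow_sub hgpos, he2]
      -- bound on the inner product with the disturbance
      have hP : μ * (f (x t) - fstar) ≤ 1 / 2 * g ^ 2 := by
        rw [hg, hv]; exact hPL (x t)
      have hQ := hQG (x t)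
      have hxx : μ ^ 2 * ‖x t - xstar‖ ^ 2 ≤ g ^ 2 := by
        have hQ2 := mul_le_mul_of_nonneg_left hQ hμ.le
        linarith only [hQ2, hP]
      have hlb : lbar * μ ^ 2 = l := by rw [hlbar]; field_simp
      have hie : ⟪v, ε (x t)⟫ ≤ lbar * g ^ 3 := by
        have h1 : ⟪v, ε (x t)⟫ ≤ g * ‖ε (x t)‖ := by
          rw [hg]; exact real_inner_le_norm v (ε (x t))
        have h2 := hε (x t)
        have h3 : ⟪v, ε (x t)⟫ ≤ g * (l * ‖x t - xstar‖ ^ 2) :=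
          le_trans h1 (mul_le_mul_of_nonneg_left h2 hgpos.le)
        have h5 : l * ‖x t - xstar‖ ^ 2 ≤ lbar * g ^ 2 := by
          calc l * ‖x t - xstar‖ ^ 2 = lbar * (μ ^ 2 * ‖x t - xstar‖ ^ 2) := by
                rw [← hlb]; ring
            _ ≤ lbar * g ^ 2 := mul_le_mul_of_nonneg_left hxx hlbarpos.le
        have h4 : g * (l * ‖x t - xstar‖ ^ 2) ≤ lbar * g ^ 3 := by
          calc g * (l * ‖x t - xstar‖ ^ 2) ≤ g * (lbar * g ^ 2) :=
                mul_le_mul_of_nonneg_left h5 hgpos.le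
            _ = lbar * g ^ 3 := by ring
        linarith only [h3, h4]
      have hg3 : (g:ℝ) ^ (3:ℕ) = g ^ ((3:ℝ)) := by
        rw [show (3:ℝ) = ((3:ℕ):ℝ) by norm_num, Real.rpow_natCast]
      have hie' : ⟪v, ε (x t)⟫ ≤ lbar * g ^ ((3:ℝ)) := by rw [← hg3]; exact hie
      -- g^3 ≤ g^(2α) + g^(2β)
      have hg3split : g ^ ((3:ℝ)) ≤ g ^ (2 * α) + g ^ (2 * β) := by
        rcases le_total g 1 with h | h
        · have h5 := Real.rpow_le_rpow_of_exponent_ge hgpos h h2α3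
          have h6 : 0 ≤ g ^ (2 * β) := Real.rpow_nonneg hgpos.le _
          linarith only [h5, h6]
        · have h5 := Real.rpow_le_rpow_of_exponent_le h h32β
          have h6 : 0 ≤ g ^ (2 * α) := Real.rpow_nonneg hgpos.le _
          linarith only [h5, h6]
      -- p V^α ≤ (c1 - lbar) g^(2α) and similarly for q
      have hVteq : V t = f (x t) - fstar := by rw [hV]
      have hμV : 2 * μ * V t ≤ g ^ ((2:ℝ)) := by
        rw [← hg2, hVteq]; linarith only [hP]
      have hkey : ∀ γ : ℝ, 0 < γ → (2 * μ) ^ γ * V t ^ γ ≤ g ^ (2 * γ) := by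
        intro γ hγ
        have h1 : (2 * μ * V t) ^ γ ≤ (g ^ ((2:ℝ))) ^ γ :=
          Real.rpow_le_rpow (mul_nonneg h2μ.le (hVnn t)) hμV hγ.le
        have h2 : (g ^ ((2:ℝ))) ^ γ = g ^ (2 * γ) := (Real.rpow_mul hgpos.le 2 γ).symm
        have h3 : (2 * μ * V t) ^ γ = (2 * μ) ^ γ * V t ^ γ :=
          Real.mul_rpow h2μ.le (hVnn t)
        rw [← h3, ← h2]; exact h1
      have hVα : p * V t ^ α ≤ (c1 - lbar) * g ^ (2 * α) := by
        rw [hpdef, mul_assoc]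
        exact mul_le_mul_of_nonneg_left (hkey α hα0) hc1l'.le
      have hVβ : q * V t ^ β ≤ (c2 - lbar) * g ^ (2 * β) := by
        rw [hqdef, mul_assoc]
        exact mul_le_mul_of_nonneg_left (hkey β hβ0) hc2l'.le
      have hsplit' : lbar * g ^ ((3:ℝ)) ≤ lbar * (g ^ (2 * α) + g ^ (2 * β)) :=
        mul_le_mul_of_nonneg_left hg3split hlbarpos.le
      have hA' : -(c1 / g ^ ((p1 - 2) / (p1 - 1))) * g ^ 2 = -(c1 * g ^ (2 * α)) := by
        rw [← hA]; ring
      have h7 : ⟪v, ε (x t)⟫ ≤ lbar * (g ^ (2 * α) + g ^ (2 * β)) :=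
        le_trans hie' hsplit'
      rw [hVal, hA', hB]
      linarith only [h7, hVα, hVβ]
  -- apply the comparison lemma
  intro t ht
  have hVt : V t = 0 := by
    apply fxts_comparison p q α β hppos hqpos hα0 hα1 hβ1 V V' hd hVnn hineq
    rw [← hT]; exact ht
  have hVt' : f (x t) - fstar = 0 := by simpa [hV] using hVt
  exact huniq _ (by linarith only [hVt'])
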